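/- Let G be a (bull, chair)-free graph containing an induced odd cycle Q = v_1 v_2 … v_p v_1 of length p ≥ 7 (p odd). If a vertex w ∉ Q has at least one neighbor in Q, then either w is adjacent to every vertex of Q, or there exists an index i (modulo p) such that the set of neighbors of w in Q is exactly {v_{i-1}, v_i, v_{i+1}}. -/

import Mathlib

open SimpleGraph Finset

/-- The cycle graph on `Fin p` (for `p ≥ 3` this is the cycle `C_p`). -/
def cycleG (p : ℕ) [NeZero p] : SimpleGraph (Fin p) where
  Adj i j := i ≠ j ∧ (i + 1 = j ∨ j + 1 = i)
  symm := by
    constructor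
    rintro i j ⟨h, h'⟩
    exact ⟨h.symm, h'.symm⟩
  loopless := by
    constructor
    rintro i ⟨h, _⟩
    exact h rfl

/-- The clique expansion `C_p[k 0, …, k (p-1)]` of the cycle `C_p`:
vertices of the cycle are replaced by cliques of the prescribed sizes, and
all edges are added between cyclically consecutive cliques. -/
def cliqueExpansion (p : ℕ) [NeZero p] (k : Fin p → ℕ) : SimpleGraph (Σ i : Fin p, Fin (k i)) where
  Adj a b := a ≠ b ∧ (a.1 = b.1 ∨ a.1 + 1 = b.1 ∨ b.1 + 1 = a.1)
  symm := by
    constructor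
    rintro a b ⟨h, h'⟩
    refine ⟨h.symm, ?_⟩
    rcases h' with h' | h' | h'
    · exact Or.inl h'.symm
    · exact Or.inr (Or.inr h')
    · exact Or.inr (Or.inl h')
  loopless := by
    constructor
    rintro a ⟨h, _⟩
    exact h rfl

/-- The join `G ⊕ H` of two graphs: disjoint union plus all edges in between. -/
def joinG {α β : Type*} (G : SimpleGraph α) (H : SimpleGraph β) : SimpleGraph (α ⊕ β) where
  Adj x y :=
    match x, y with
    | Sum.inl a, Sum.inl b => G.Adj a b
    | Sum.inr a, Sum.inr b => H.Adj a b
    | _, _ => True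
  symm := by
    constructor
    rintro (a | a) (b | b) h
    · exact G.adj_symm h
    · trivial
    · trivial
    · exact H.adj_symm h
  loopless := by
    constructor
    rintro (a | a) h
    · exact G.irrefl h
    · exact H.irrefl h

/-- The bull: a triangle with two pendant edges. -/
def bull : SimpleGraph (Fin 5) :=
  SimpleGraph.fromRel (fun a b =>
    (a = 0 ∧ b = 1) ∨ (a = 1 ∧ b = 2) ∨ (a = 2 ∧ b = 3) ∨ (a = 3 ∧ b = 4) ∨ (a = 1 ∧ b = 3))

/-- The claw `K_{1,3}`. -/
def claw : SimpleGraph (Fin 4) :=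
  SimpleGraph.fromRel (fun a b => a = 0 ∧ b ≠ 0)

/-- The chair: the claw with one edge subdivided once. -/
def chair : SimpleGraph (Fin 5) :=
  SimpleGraph.fromRel (fun a b =>
    (a = 0 ∧ b = 1) ∨ (a = 0 ∧ b = 2) ∨ (a = 0 ∧ b = 3) ∨ (a = 3 ∧ b = 4))

/-- `G` contains `H` as a (not necessarily induced) subgraph. -/
def ContainsSub {V W : Type*} (G : SimpleGraph V) (H : SimpleGraph W) : Prop :=
  ∃ f : H →g G, Function.Injective f

/-- The independence number of a finite graph. -/
noncomputable def indepNum {V : Type*} [Fintype V] (G : SimpleGraph V) : ℕ :=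
  sSup {n | ∃ s : Finset V, s.card = n ∧ ∀ a ∈ s, ∀ b ∈ s, a ≠ b → ¬ G.Adj a b}

/-- Clique sizes of the spindle graph `M_{3i+1} = C_{2i+1}[2,1,2,1,…,2,1,1]`. -/
def spindleKs (i : ℕ) : Fin (2 * i + 1) → ℕ :=
  fun j => if j.val % 2 = 0 ∧ j.val < 2 * i then 2 else 1

/-- Clique sizes `[2,…,2,1,3,1,3,1,…,3,1]`: `a` copies of `2`, then a `1`,
then alternating `3,1`-pairs up to length `p`. -/
def patternKs (p a : ℕ) : Fin p → ℕ :=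
  fun j => if j.val < a then 2 else if (j.val - a) % 2 = 0 then 1 else 3


lemma mkChair {V : Type*} {G : SimpleGraph V} {a b c d e : V}
    (hab : G.Adj a b) (hac : G.Adj a c) (had : G.Adj a d) (hde : G.Adj d e)
    (nbc : ¬G.Adj b c) (nbd : ¬G.Adj b d) (nbe : ¬G.Adj b e)
    (ncd : ¬G.Adj c d) (nce : ¬G.Adj c e) (nae : ¬G.Adj a e)
    (ebc : b ≠ c) (ebd : b ≠ d) (ebe : b ≠ e) (ecd : c ≠ d) (ece : c ≠ e) (eae : a ≠ e) :
    Nonempty (chair ↪g G) := by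
  have e1 : a ≠ b := hab.ne
  have e2 : a ≠ c := hac.ne
  have e3 : a ≠ d := had.ne
  have e4 : d ≠ e := hde.ne
  have s1 := hab.symm; have s2 := hac.symm; have s3 := had.symm; have s4 := hde.symm
  have m1 : ¬G.Adj c b := fun h => nbc h.symm
  have m2 : ¬G.Adj d b := fun h => nbd h.symm
  have m3 : ¬G.Adj e b := fun h => nbe h.symm
  have m4 : ¬G.Adj d c := fun h => ncd h.symm
  have m5 : ¬G.Adj e c := fun h => nce h.symm
  have m6 : ¬G.Adj e a := fun h => nae h.symm
  refine ⟨⟨⟨![a,b,c,d,e], ?_⟩, ?_⟩⟩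
  · intro x y h
    fin_cases x <;> fin_cases y <;> simp_all
  · intro x y
    change G.Adj (![a,b,c,d,e] x) (![a,b,c,d,e] y) ↔ _
    fin_cases x <;> fin_cases y <;>
      simp_all [chair, SimpleGraph.fromRel_adj]

lemma mkBull {V : Type*} {G : SimpleGraph V} {a b c d e : V}
    (hab : G.Adj a b) (hbc : G.Adj b c) (hcd : G.Adj c d) (hde : G.Adj d e) (hbd : G.Adj b d)
    (nac : ¬G.Adj a c) (nad : ¬G.Adj a d) (nae : ¬G.Adj a e)
    (nbe : ¬G.Adj b e) (nce : ¬G.Adj c e)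
    (eac : a ≠ c) (ead : a ≠ d) (eae : a ≠ e) (ebe : b ≠ e) (ece : c ≠ e) :
    Nonempty (bull ↪g G) := by
  have e1 : a ≠ b := hab.ne
  have e2 : b ≠ c := hbc.ne
  have e3 : c ≠ d := hcd.ne
  have e4 : d ≠ e := hde.ne
  have e5 : b ≠ d := hbd.ne
  have s1 := hab.symm; have s2 := hbc.symm; have s3 := hcd.symm; have s4 := hde.symm
  have s5 := hbd.symm
  have m1 : ¬G.Adj c a := fun h => nac h.symm
  have m2 : ¬G.Adj d a := fun h => nad h.symm
  have m3 : ¬G.Adj e a := fun h => nae h.symm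
  have m4 : ¬G.Adj e b := fun h => nbe h.symm
  have m5 : ¬G.Adj e c := fun h => nce h.symm
  refine ⟨⟨⟨![a,b,c,d,e], ?_⟩, ?_⟩⟩
  · intro x y h
    fin_cases x <;> fin_cases y <;> simp_all
  · intro x y
    change G.Adj (![a,b,c,d,e] x) (![a,b,c,d,e] y) ↔ _
    fin_cases x <;> fin_cases y <;>
      simp_all [bull, SimpleGraph.fromRel_adj]

section S11
open Fin.NatCast Fin.CommRing
variable {p : ℕ} [NeZero p]

lemma s11_cast_eq {a b : ℕ} (ha : a < p) (hb : b < p) : ((a : Fin p) = b) ↔ a = b := by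
  rw [Fin.ext_iff, Fin.val_natCast, Fin.val_natCast, Nat.mod_eq_of_lt ha, Nat.mod_eq_of_lt hb]

lemma s11_shift_eq (x : Fin p) {a b : ℕ} (ha : a < p) (hb : b < p) :
    (x + (a : Fin p) = x + (b : Fin p)) ↔ a = b := by
  rw [add_right_inj, s11_cast_eq ha hb]

lemma s11_off_one (x : Fin p) (a : ℕ) : (x + (a : Fin p)) + 1 = x + ((a+1 : ℕ) : Fin p) := by
  push_cast; ring

lemma s11_off_p (x : Fin p) (a : ℕ) : x + ((a + p : ℕ) : Fin p) = x + (a : Fin p) := by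
  push_cast [Fin.natCast_self]; ring

lemma s11_off_zero (x : Fin p) : x + ((0:ℕ) : Fin p) = x := by simp

lemma s11_off_congr (x : Fin p) (a b : ℕ) (h : a = b ∨ a = b + p ∨ b = a + p) :
    x + (a : Fin p) = x + (b : Fin p) := by
  rcases h with h | h | h
  · rw [h]
  · rw [h, s11_off_p]
  · rw [h, s11_off_p]

lemma s11_off_norm (x : Fin p) (a b c : ℕ) (h : a + b = c ∨ a + b = c + p ∨ c = a + b + p) :
    (x + (a : Fin p)) + (b : Fin p) = x + (c : Fin p) := by
  rw [show (x + (a : Fin p)) + (b : Fin p) = x + ((a+b : ℕ) : Fin p) by push_cast; ring]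
  exact s11_off_congr x _ _ h

lemma s11_cyc_adj (x : Fin p) {a b : ℕ} (hp : 2 ≤ p) (ha : a < p) (hb : b < p) :
    (cycleG p).Adj (x + (a:Fin p)) (x + (b:Fin p)) ↔
      (a ≠ b ∧ (a+1 = b ∨ b+1 = a ∨ (a = p-1 ∧ b = 0) ∨ (b = p-1 ∧ a = 0))) := by
  show (_ ≠ _ ∧ _) ↔ _
  rw [ne_eq, s11_shift_eq x ha hb, s11_off_one, s11_off_one]
  constructor
  · rintro ⟨h1, h2 | h2⟩
    · refine ⟨h1, ?_⟩
      rcases Nat.lt_or_ge (a+1) p with h | h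
      · rw [s11_shift_eq x h hb] at h2; exact Or.inl h2
      · have hap : a + 1 = p := by omega
        rw [hap] at h2
        have hz : ((p:ℕ) : Fin p) = ((0:ℕ) : Fin p) := by simp
        rw [hz, s11_shift_eq x (by omega) hb] at h2
        exact Or.inr (Or.inr (Or.inl ⟨by omega, h2.symm⟩))
    · refine ⟨h1, ?_⟩
      rcases Nat.lt_or_ge (b+1) p with h | h
      · rw [s11_shift_eq x h ha] at h2; exact Or.inr (Or.inl h2)
      · have hbp : b + 1 = p := by omega
        rw [hbp] at h2
        have hz : ((p:ℕ) : Fin p) = ((0:ℕ) : Fin p) := by simp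
        rw [hz, s11_shift_eq x (by omega) ha] at h2
        exact Or.inr (Or.inr (Or.inr ⟨by omega, h2.symm⟩))
  · rintro ⟨h1, h2 | h2 | ⟨h2, h3⟩ | ⟨h2, h3⟩⟩
    · exact ⟨h1, Or.inl ((s11_shift_eq x (by omega) hb).mpr h2)⟩
    · exact ⟨h1, Or.inr ((s11_shift_eq x (by omega) ha).mpr h2)⟩
    · subst h3
      refine ⟨h1, Or.inl ?_⟩
      have h4 : a + 1 = p := by omega
      rw [h4]; simp
    · subst h3
      refine ⟨h1, Or.inr ?_⟩
      have h4 : b + 1 = p := by omega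
      rw [h4]; simp

variable {V : Type*} {G : SimpleGraph V}
  (hp : 7 ≤ p) {v : Fin p → V} (hvinj : Function.Injective v)
  (hv : ∀ i j : Fin p, G.Adj (v i) (v j) ↔ (cycleG p).Adj i j)
  {w : V} (hw : ∀ i, w ≠ v i)

include hp hv in
lemma s11_gAdj (x : Fin p) {a b : ℕ} (ha : a < p) (hb : b < p) :
    G.Adj (v (x + (a:Fin p))) (v (x + (b:Fin p))) ↔
      (a ≠ b ∧ (a+1 = b ∨ b+1 = a ∨ (a = p-1 ∧ b = 0) ∨ (b = p-1 ∧ a = 0))) :=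
  (hv _ _).trans (s11_cyc_adj x (by omega) ha hb)

include hvinj in
lemma s11_vne (x : Fin p) {a b : ℕ} (ha : a < p) (hb : b < p) (h : a ≠ b) :
    v (x + (a:Fin p)) ≠ v (x + (b:Fin p)) :=
  fun hEq => h ((s11_shift_eq x ha hb).mp (hvinj hEq))

variable (hchair : ¬ Nonempty (chair ↪g G)) (hbull : ¬ Nonempty (bull ↪g G))

include hp hvinj hv hw hchair in
lemma s11_T1 (x : Fin p)
    (a0 : G.Adj w (v (x + ((0:ℕ):Fin p))))
    (nm1 : ¬ G.Adj w (v (x + ((p-1:ℕ):Fin p))))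
    (n1 : ¬ G.Adj w (v (x + ((1:ℕ):Fin p))))
    (n2 : ¬ G.Adj w (v (x + ((2:ℕ):Fin p)))) : False := by
  apply hchair
  exact mkChair (a := v (x + ((0:ℕ):Fin p))) (b := w) (c := v (x + ((p-1:ℕ):Fin p)))
    (d := v (x + ((1:ℕ):Fin p))) (e := v (x + ((2:ℕ):Fin p)))
    a0.symm
    ((s11_gAdj hp hv x (by omega) (by omega)).mpr (by omega))
    ((s11_gAdj hp hv x (by omega) (by omega)).mpr (by omega))
    ((s11_gAdj hp hv x (by omega) (by omega)).mpr (by omega))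
    nm1 n1 n2
    (fun h => by have := (s11_gAdj hp hv x (by omega) (by omega)).mp h; omega)
    (fun h => by have := (s11_gAdj hp hv x (by omega) (by omega)).mp h; omega)
    (fun h => by have := (s11_gAdj hp hv x (by omega) (by omega)).mp h; omega)
    (hw _) (hw _) (hw _)
    (s11_vne hvinj x (by omega) (by omega) (by omega))
    (s11_vne hvinj x (by omega) (by omega) (by omega))
    (s11_vne hvinj x (by omega) (by omega) (by omega))

include hp hvinj hv hw hchair in
lemma s11_T1' (x : Fin p)
    (a0 : G.Adj w (v (x + ((0:ℕ):Fin p))))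
    (n1 : ¬ G.Adj w (v (x + ((1:ℕ):Fin p))))
    (nm1 : ¬ G.Adj w (v (x + ((p-1:ℕ):Fin p))))
    (nm2 : ¬ G.Adj w (v (x + ((p-2:ℕ):Fin p)))) : False := by
  apply hchair
  exact mkChair (a := v (x + ((0:ℕ):Fin p))) (b := w) (c := v (x + ((1:ℕ):Fin p)))
    (d := v (x + ((p-1:ℕ):Fin p))) (e := v (x + ((p-2:ℕ):Fin p)))
    a0.symm
    ((s11_gAdj hp hv x (by omega) (by omega)).mpr (by omega))
    ((s11_gAdj hp hv x (by omega) (by omega)).mpr (by omega))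
    ((s11_gAdj hp hv x (by omega) (by omega)).mpr (by omega))
    n1 nm1 nm2
    (fun h => by have := (s11_gAdj hp hv x (by omega) (by omega)).mp h; omega)
    (fun h => by have := (s11_gAdj hp hv x (by omega) (by omega)).mp h; omega)
    (fun h => by have := (s11_gAdj hp hv x (by omega) (by omega)).mp h; omega)
    (hw _) (hw _) (hw _)
    (s11_vne hvinj x (by omega) (by omega) (by omega))
    (s11_vne hvinj x (by omega) (by omega) (by omega))
    (s11_vne hvinj x (by omega) (by omega) (by omega))

include hp hvinj hv hw hbull in
lemma s11_T2 (x : Fin p)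
    (a0 : G.Adj w (v (x + ((0:ℕ):Fin p))))
    (a1 : G.Adj w (v (x + ((1:ℕ):Fin p))))
    (nm1 : ¬ G.Adj w (v (x + ((p-1:ℕ):Fin p))))
    (n2 : ¬ G.Adj w (v (x + ((2:ℕ):Fin p)))) : False := by
  apply hbull
  exact mkBull (a := v (x + ((p-1:ℕ):Fin p))) (b := v (x + ((0:ℕ):Fin p))) (c := w)
    (d := v (x + ((1:ℕ):Fin p))) (e := v (x + ((2:ℕ):Fin p)))
    ((s11_gAdj hp hv x (by omega) (by omega)).mpr (by omega))
    a0.symm a1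
    ((s11_gAdj hp hv x (by omega) (by omega)).mpr (by omega))
    ((s11_gAdj hp hv x (by omega) (by omega)).mpr (by omega))
    (fun h => nm1 h.symm)
    (fun h => by have := (s11_gAdj hp hv x (by omega) (by omega)).mp h; omega)
    (fun h => by have := (s11_gAdj hp hv x (by omega) (by omega)).mp h; omega)
    (fun h => by have := (s11_gAdj hp hv x (by omega) (by omega)).mp h; omega)
    n2
    (fun h => (hw _) h.symm)
    (s11_vne hvinj x (by omega) (by omega) (by omega))
    (s11_vne hvinj x (by omega) (by omega) (by omega))
    (s11_vne hvinj x (by omega) (by omega) (by omega))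
    (hw _)

include hp hvinj hv hw hchair in
lemma s11_T3 (x : Fin p) (s t : ℕ)
    (hs3 : 3 ≤ s) (hs2 : s ≤ p-2) (ht3 : 3 ≤ t) (ht2 : t ≤ p-2)
    (f1 : s ≠ t) (f2 : s+1 ≠ t) (f3 : t+1 ≠ s)
    (a0 : G.Adj w (v (x + ((0:ℕ):Fin p))))
    (n1 : ¬ G.Adj w (v (x + ((1:ℕ):Fin p))))
    (as : G.Adj w (v (x + ((s:ℕ):Fin p))))
    (at' : G.Adj w (v (x + ((t:ℕ):Fin p)))) : False := by
  apply hchair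
  exact mkChair (a := w) (b := v (x + ((s:ℕ):Fin p))) (c := v (x + ((t:ℕ):Fin p)))
    (d := v (x + ((0:ℕ):Fin p))) (e := v (x + ((1:ℕ):Fin p)))
    as at' a0
    ((s11_gAdj hp hv x (by omega) (by omega)).mpr (by omega))
    (fun h => by have := (s11_gAdj hp hv x (by omega) (by omega)).mp h; omega)
    (fun h => by have := (s11_gAdj hp hv x (by omega) (by omega)).mp h; omega)
    (fun h => by have := (s11_gAdj hp hv x (by omega) (by omega)).mp h; omega)
    (fun h => by have := (s11_gAdj hp hv x (by omega) (by omega)).mp h; omega)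
    (fun h => by have := (s11_gAdj hp hv x (by omega) (by omega)).mp h; omega)
    n1
    (s11_vne hvinj x (by omega) (by omega) (by omega))
    (s11_vne hvinj x (by omega) (by omega) (by omega))
    (s11_vne hvinj x (by omega) (by omega) (by omega))
    (s11_vne hvinj x (by omega) (by omega) (by omega))
    (s11_vne hvinj x (by omega) (by omega) (by omega))
    (hw _)

include hp hvinj hv hw hchair in
lemma s11_T3' (x : Fin p) (s t : ℕ)
    (hs3 : 2 ≤ s) (hs2 : s ≤ p-3) (ht3 : 2 ≤ t) (ht2 : t ≤ p-3)
    (f1 : s ≠ t) (f2 : s+1 ≠ t) (f3 : t+1 ≠ s)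
    (a0 : G.Adj w (v (x + ((0:ℕ):Fin p))))
    (nm1 : ¬ G.Adj w (v (x + ((p-1:ℕ):Fin p))))
    (as : G.Adj w (v (x + ((s:ℕ):Fin p))))
    (at' : G.Adj w (v (x + ((t:ℕ):Fin p)))) : False := by
  apply hchair
  exact mkChair (a := w) (b := v (x + ((s:ℕ):Fin p))) (c := v (x + ((t:ℕ):Fin p)))
    (d := v (x + ((0:ℕ):Fin p))) (e := v (x + ((p-1:ℕ):Fin p)))
    as at' a0
    ((s11_gAdj hp hv x (by omega) (by omega)).mpr (by omega))
    (fun h => by have := (s11_gAdj hp hv x (by omega) (by omega)).mp h; omega)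
    (fun h => by have := (s11_gAdj hp hv x (by omega) (by omega)).mp h; omega)
    (fun h => by have := (s11_gAdj hp hv x (by omega) (by omega)).mp h; omega)
    (fun h => by have := (s11_gAdj hp hv x (by omega) (by omega)).mp h; omega)
    (fun h => by have := (s11_gAdj hp hv x (by omega) (by omega)).mp h; omega)
    nm1
    (s11_vne hvinj x (by omega) (by omega) (by omega))
    (s11_vne hvinj x (by omega) (by omega) (by omega))
    (s11_vne hvinj x (by omega) (by omega) (by omega))
    (s11_vne hvinj x (by omega) (by omega) (by omega))
    (s11_vne hvinj x (by omega) (by omega) (by omega))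
    (hw _)

include hp hvinj hv hw hbull in
lemma s11_T4 (x : Fin p) (s : ℕ) (hs4 : 4 ≤ s) (hs2 : s ≤ p-2)
    (a0 : G.Adj w (v (x + ((0:ℕ):Fin p))))
    (a1 : G.Adj w (v (x + ((1:ℕ):Fin p))))
    (n2 : ¬ G.Adj w (v (x + ((2:ℕ):Fin p))))
    (as : G.Adj w (v (x + ((s:ℕ):Fin p)))) : False := by
  apply hbull
  exact mkBull (a := v (x + ((s:ℕ):Fin p))) (b := w) (c := v (x + ((0:ℕ):Fin p)))
    (d := v (x + ((1:ℕ):Fin p))) (e := v (x + ((2:ℕ):Fin p)))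
    as.symm a0
    ((s11_gAdj hp hv x (by omega) (by omega)).mpr (by omega))
    ((s11_gAdj hp hv x (by omega) (by omega)).mpr (by omega))
    a1
    (fun h => by have := (s11_gAdj hp hv x (by omega) (by omega)).mp h; omega)
    (fun h => by have := (s11_gAdj hp hv x (by omega) (by omega)).mp h; omega)
    (fun h => by have := (s11_gAdj hp hv x (by omega) (by omega)).mp h; omega)
    n2
    (fun h => by have := (s11_gAdj hp hv x (by omega) (by omega)).mp h; omega)
    (s11_vne hvinj x (by omega) (by omega) (by omega))
    (s11_vne hvinj x (by omega) (by omega) (by omega))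
    (s11_vne hvinj x (by omega) (by omega) (by omega))
    (hw _)
    (s11_vne hvinj x (by omega) (by omega) (by omega))

include hp hvinj hv hw hbull in
lemma s11_T4' (x : Fin p) (s : ℕ) (hs3 : 3 ≤ s) (hs2 : s ≤ p-3)
    (a0 : G.Adj w (v (x + ((0:ℕ):Fin p))))
    (a1 : G.Adj w (v (x + ((1:ℕ):Fin p))))
    (nm1 : ¬ G.Adj w (v (x + ((p-1:ℕ):Fin p))))
    (as : G.Adj w (v (x + ((s:ℕ):Fin p)))) : False := by
  apply hbull
  exact mkBull (a := v (x + ((s:ℕ):Fin p))) (b := w) (c := v (x + ((1:ℕ):Fin p)))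
    (d := v (x + ((0:ℕ):Fin p))) (e := v (x + ((p-1:ℕ):Fin p)))
    as.symm a1
    ((s11_gAdj hp hv x (by omega) (by omega)).mpr (by omega))
    ((s11_gAdj hp hv x (by omega) (by omega)).mpr (by omega))
    a0
    (fun h => by have := (s11_gAdj hp hv x (by omega) (by omega)).mp h; omega)
    (fun h => by have := (s11_gAdj hp hv x (by omega) (by omega)).mp h; omega)
    (fun h => by have := (s11_gAdj hp hv x (by omega) (by omega)).mp h; omega)
    nm1
    (fun h => by have := (s11_gAdj hp hv x (by omega) (by omega)).mp h; omega)
    (s11_vne hvinj x (by omega) (by omega) (by omega))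
    (s11_vne hvinj x (by omega) (by omega) (by omega))
    (s11_vne hvinj x (by omega) (by omega) (by omega))
    (hw _)
    (s11_vne hvinj x (by omega) (by omega) (by omega))

include hp hvinj hv hw hchair hbull in
lemma s11_LG (x : Fin p)
    (ax : G.Adj w (v (x + ((0:ℕ):Fin p))))
    (n1 : ¬ G.Adj w (v (x + ((1:ℕ):Fin p))))
    (a2 : G.Adj w (v (x + ((2:ℕ):Fin p)))) : False := by
  have hm : G.Adj w (v (x + ((p-1:ℕ):Fin p))) ∨ G.Adj w (v (x + ((p-2:ℕ):Fin p))) := by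
    by_contra hc
    push_neg at hc
    exact s11_T1' hp hvinj hv hw hchair x ax n1 hc.1 hc.2
  have a2' : G.Adj w (v ((x + ((2:ℕ):Fin p)) + ((0:ℕ):Fin p))) := by
    rw [s11_off_norm x 2 0 2 (by omega)]; exact a2
  have n1' : ¬ G.Adj w (v ((x + ((2:ℕ):Fin p)) + ((p-1:ℕ):Fin p))) := by
    rw [s11_off_norm x 2 (p-1) 1 (by omega)]; exact n1
  have a4 : G.Adj w (v (x + ((4:ℕ):Fin p))) := by
    by_cases h4 : G.Adj w (v (x + ((4:ℕ):Fin p)))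
    · exact h4
    exfalso
    have h3 : G.Adj w (v (x + ((3:ℕ):Fin p))) := by
      by_contra h3
      refine s11_T1 hp hvinj hv hw hchair (x + ((2:ℕ):Fin p)) a2' n1' ?_ ?_
      · rw [s11_off_norm x 2 1 3 (by omega)]; exact h3
      · rw [s11_off_norm x 2 2 4 (by omega)]; exact h4
    refine s11_T2 hp hvinj hv hw hbull (x + ((2:ℕ):Fin p)) a2' ?_ n1' ?_
    · rw [s11_off_norm x 2 1 3 (by omega)]; exact h3
    · rw [s11_off_norm x 2 2 4 (by omega)]; exact h4
  rcases hm with hm1 | hm2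
  · refine s11_T3' hp hvinj hv hw hchair (x + ((2:ℕ):Fin p)) (p-3) 2
      (by omega) (by omega) (by omega) (by omega) (by omega) (by omega) (by omega)
      a2' n1' ?_ ?_
    · rw [s11_off_norm x 2 (p-3) (p-1) (by omega)]; exact hm1
    · rw [s11_off_norm x 2 2 4 (by omega)]; exact a4
  · rcases Nat.lt_or_ge p 8 with h7 | h8
    · have hp7 : p = 7 := by omega
      subst hp7
      by_cases h3 : G.Adj w (v (x + ((3:ℕ):Fin 7)))
      · refine s11_T4' hp hvinj hv hw hbull (x + ((2:ℕ):Fin 7)) 3 (by omega) (by omega)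
          a2' ?_ n1' ?_
        · rw [s11_off_norm x 2 1 3 (by omega)]; exact h3
        · rw [s11_off_norm x 2 3 (7-2) (by omega)]; exact hm2
      · refine s11_T3 hp hvinj hv hw hchair (x + ((2:ℕ):Fin 7)) 5 3
          (by omega) (by omega) (by omega) (by omega) (by omega) (by omega) (by omega)
          a2' ?_ ?_ ?_
        · rw [s11_off_norm x 2 1 3 (by omega)]; exact h3
        · rw [s11_off_norm x 2 5 0 (by omega)]; exact ax
        · rw [s11_off_norm x 2 3 (7-2) (by omega)]; exact hm2
    · refine s11_T3' hp hvinj hv hw hchair (x + ((2:ℕ):Fin p)) (p-4) 2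
        (by omega) (by omega) (by omega) (by omega) (by omega) (by omega) (by omega)
        a2' n1' ?_ ?_
      · rw [s11_off_norm x 2 (p-4) (p-2) (by omega)]; exact hm2
      · rw [s11_off_norm x 2 2 4 (by omega)]; exact a4
end S11

open Fin.NatCast Fin.CommRing

theorem neighbors_on_odd_cycle {V : Type*} (G : SimpleGraph V)
    (hbull : ¬ Nonempty (bull ↪g G)) (hchair : ¬ Nonempty (chair ↪g G))
    (p : ℕ) [NeZero p] (hodd : Odd p) (hp : 7 ≤ p)
    (v : Fin p → V) (hvinj : Function.Injective v)
    (hv : ∀ i j : Fin p, G.Adj (v i) (v j) ↔ (cycleG p).Adj i j)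
    (w : V) (hw : ∀ i, w ≠ v i) (hadj : ∃ i, G.Adj w (v i)) :
    (∀ i : Fin p, G.Adj w (v i)) ∨
    (∃ i : Fin p, ∀ j : Fin p, G.Adj w (v j) ↔ (j = i - 1 ∨ j = i ∨ j = i + 1)) := by
  classical
  by_cases hall : ∀ i, G.Adj w (v i)
  · exact Or.inl hall
  right
  obtain ⟨i0, hi0⟩ := hadj
  push_neg at hall
  obtain ⟨m, hm⟩ := hall
  have hbd : ∃ x : Fin p, G.Adj w (v x) ∧ ¬ G.Adj w (v (x+1)) := by
    by_contra hc
    push_neg at hc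
    have grow : ∀ k : ℕ, G.Adj w (v (i0 + (k : Fin p))) := by
      intro k
      induction k with
      | zero => simpa using hi0
      | succ n ih =>
        have h2 := hc _ ih
        rwa [s11_off_one] at h2
    apply hm
    have hrep : i0 + (((m - i0 : Fin p).val : ℕ) : Fin p) = m := by
      rw [Fin.cast_val_eq_self, add_comm, sub_add_cancel]
    rw [← hrep]
    exact grow _
  obtain ⟨i, hAi, hn1'⟩ := hbd
  have ax0 : G.Adj w (v (i + ((0:ℕ):Fin p))) := by rw [s11_off_zero]; exact hAi
  have n1 : ¬ G.Adj w (v (i + ((1:ℕ):Fin p))) := by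
    rw [show ((1:ℕ):Fin p) = (1 : Fin p) by norm_num]; exact hn1'
  have m1 : G.Adj w (v (i + ((p-1:ℕ):Fin p))) := by
    by_contra hno
    have m2' : G.Adj w (v (i + ((p-2:ℕ):Fin p))) := by
      by_contra hno2
      exact s11_T1' hp hvinj hv hw hchair i ax0 n1 hno hno2
    refine s11_LG hp hvinj hv hw hchair hbull (i + ((p-2:ℕ):Fin p)) ?_ ?_ ?_
    · rw [s11_off_norm i (p-2) 0 (p-2) (by omega)]; exact m2'
    · rw [s11_off_norm i (p-2) 1 (p-1) (by omega)]; exact hno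
    · rw [s11_off_norm i (p-2) 2 0 (by omega)]; exact ax0
  have m2 : G.Adj w (v (i + ((p-2:ℕ):Fin p))) := by
    by_contra hno
    refine s11_T2 hp hvinj hv hw hbull (i + ((p-1:ℕ):Fin p)) ?_ ?_ ?_ ?_
    · rw [s11_off_norm i (p-1) 0 (p-1) (by omega)]; exact m1
    · rw [s11_off_norm i (p-1) 1 0 (by omega)]; exact ax0
    · rw [s11_off_norm i (p-1) (p-1) (p-2) (by omega)]; exact hno
    · rw [s11_off_norm i (p-1) 2 1 (by omega)]; exact n1
  have n2 : ¬ G.Adj w (v (i + ((2:ℕ):Fin p))) :=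
    fun h2 => s11_LG hp hvinj hv hw hchair hbull i ax0 n1 h2
  have n3 : ¬ G.Adj w (v (i + ((p-3:ℕ):Fin p))) := by
    intro h3
    refine s11_T4 hp hvinj hv hw hbull (i + ((p-1:ℕ):Fin p)) (p-2) (by omega) (by omega)
      ?_ ?_ ?_ ?_
    · rw [s11_off_norm i (p-1) 0 (p-1) (by omega)]; exact m1
    · rw [s11_off_norm i (p-1) 1 0 (by omega)]; exact ax0
    · rw [s11_off_norm i (p-1) 2 1 (by omega)]; exact n1
    · rw [s11_off_norm i (p-1) (p-2) (p-3) (by omega)]; exact h3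
  have key : ∀ a : ℕ, a < p →
      (G.Adj w (v (i + (a : Fin p))) ↔ (a = 0 ∨ a = p-1 ∨ a = p-2)) := by
    intro a ha
    constructor
    · intro hAa
      by_contra hcon
      push_neg at hcon
      obtain ⟨hc0, hc1, hc2⟩ := hcon
      have hsplit : a = 1 ∨ a = 2 ∨ a = p-3 ∨ (3 ≤ a ∧ a ≤ p-4) := by omega
      rcases hsplit with h|h|h|⟨hA3, hA4⟩
      · subst h; exact n1 hAa
      · subst h; exact n2 hAa
      · subst h; exact n3 hAa
      · exact s11_T3 hp hvinj hv hw hchair i (p-2) a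
          (by omega) (by omega) (by omega) (by omega) (by omega) (by omega) (by omega)
          ax0 n1 m2 hAa
    · intro h
      rcases h with h|h|h <;> subst h
      · exact ax0
      · exact m1
      · exact m2
  refine ⟨i + ((p-1 : ℕ) : Fin p), fun j => ?_⟩
  obtain ⟨t, htp, hjt⟩ : ∃ t : ℕ, t < p ∧ j = i + (t : Fin p) :=
    ⟨(j - i : Fin p).val, (j - i : Fin p).isLt, by
      rw [Fin.cast_val_eq_self, add_comm, sub_add_cancel]⟩
  subst hjt
  rw [key t htp]
  have hc1 : i + ((p-1:ℕ):Fin p) - 1 = i + ((p-2:ℕ):Fin p) := by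
    rw [sub_eq_iff_eq_add, s11_off_one, show p-2+1 = p-1 by omega]
  have hc2 : i + ((p-1:ℕ):Fin p) + 1 = i + ((0:ℕ):Fin p) := by
    rw [s11_off_one, show p-1+1 = p by omega]
    exact s11_off_congr i p 0 (by omega)
  rw [hc1, hc2, s11_shift_eq i htp (by omega), s11_shift_eq i htp (by omega),
    s11_shift_eq i htp (by omega)]
  omega
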